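/- Let T be a real symmetric trace-free 3×3 matrix and ξ ∈ ℝ³ a nonzero vector. If for all indices i,j,k ∈ {1,2,3} the symbol equation (1/3)(T_{ij}ξ_k + T_{ik}ξ_j + T_{jk}ξ_i) − (2/15)(Σ_l T_{lk}ξ_l δ_{ij} + Σ_l T_{lj}ξ_l δ_{ik} + Σ_l T_{li}ξ_l δ_{jk}) = 0 holds, then T = 0. (ℝ-ellipticity of the symmetric trace-free gradient on symmetric trace-free matrix fields in dimension 3.) -/
import Mathlib


open Finset

/-- ℝ-ellipticity of the symmetric trace-free gradient on symmetric trace-free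
3×3 matrix fields: the vanishing of the symbol forces `T = 0`. -/
theorem stmt0 (T : Matrix (Fin 3) (Fin 3) ℝ) (hsym : T.IsSymm)
    (htr : Matrix.trace T = 0) (ξ : Fin 3 → ℝ) (hξ : ξ ≠ 0)
    (h : ∀ i j k : Fin 3,
      (1/3 : ℝ) * (T i j * ξ k + T i k * ξ j + T j k * ξ i)
        - (2/15 : ℝ) * ((∑ l, T l k * ξ l) * (if i = j then (1:ℝ) else 0)
          + (∑ l, T l j * ξ l) * (if i = k then (1:ℝ) else 0)
          + (∑ l, T l i * ξ l) * (if j = k then (1:ℝ) else 0)) = 0) :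
    T = 0 := by
  have hs10 : T 1 0 = T 0 1 := hsym.apply 0 1
  have hs20 : T 2 0 = T 0 2 := hsym.apply 0 2
  have hs21 : T 2 1 = T 1 2 := hsym.apply 1 2
  have hn : (ξ 0^2+ξ 1^2+ξ 2^2) ≠ 0 := by
    intro h0
    apply hξ
    funext i
    have h0' : (ξ 0) = 0 ∧ (ξ 1) = 0 ∧ (ξ 2) = 0 := by
      refine ⟨?_, ?_, ?_⟩ <;> nlinarith [sq_nonneg (ξ 0), sq_nonneg (ξ 1), sq_nonneg (ξ 2)]
    fin_cases i
    · exact h0'.1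
    · exact h0'.2.1
    · exact h0'.2.2
  have e000 := h 0 0 0
  have e001 := h 0 0 1
  have e002 := h 0 0 2
  have e011 := h 0 1 1
  have e012 := h 0 1 2
  have e022 := h 0 2 2
  have e111 := h 1 1 1
  have e112 := h 1 1 2
  have e122 := h 1 2 2
  have e222 := h 2 2 2
  simp only [Fin.sum_univ_three, Fin.reduceEq, reduceIte, if_true, mul_one, mul_zero,
    add_zero, zero_add] at e000 e001 e002 e011 e012 e022 e111 e112 e122 e222
  simp only [hs10, hs20, hs21] at e000 e001 e002 e011 e012 e022 e111 e112 e122 e222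
  set x := ξ 0 with hx
  set y := ξ 1 with hy
  set z := ξ 2 with hz
  have hq : (((T 0 0*x + T 0 1*y + T 0 2*z)*x + (T 0 1*x + T 1 1*y + T 1 2*z)*y
      + (T 0 2*x + T 1 2*y + T 2 2*z)*z)) * (x^2+y^2+z^2) = 0 := by
    linear_combination (5/3 : ℝ) * (x^3*e000 + 3*x^2*y*e001 + 3*x^2*z*e002 + 3*x*y^2*e011
      + 6*x*y*z*e012 + 3*x*z^2*e022 + y^3*e111 + 3*y^2*z*e112 + 3*y*z^2*e122 + z^3*e222)
  have hv0 : (T 0 0*x + T 0 1*y + T 0 2*z) * (x^2+y^2+z^2)^2 = 0 := by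
    linear_combination (15/8 : ℝ)*(x^2+y^2+z^2)*(x^2*e000 + 2*x*y*e001 + 2*x*z*e002
      + y^2*e011 + 2*y*z*e012 + z^2*e022) - (1/8 : ℝ)*x*hq
  have hv1 : (T 0 1*x + T 1 1*y + T 1 2*z) * (x^2+y^2+z^2)^2 = 0 := by
    linear_combination (15/8 : ℝ)*(x^2+y^2+z^2)*(x^2*e001 + 2*x*y*e011 + 2*x*z*e012
      + y^2*e111 + 2*y*z*e112 + z^2*e122) - (1/8 : ℝ)*y*hq
  have hv2 : (T 0 2*x + T 1 2*y + T 2 2*z) * (x^2+y^2+z^2)^2 = 0 := by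
    linear_combination (15/8 : ℝ)*(x^2+y^2+z^2)*(x^2*e002 + 2*x*y*e012 + 2*x*z*e022
      + y^2*e112 + 2*y*z*e122 + z^2*e222) - (1/8 : ℝ)*z*hq
  have hn3 : (x^2+y^2+z^2)^3 ≠ 0 := pow_ne_zero _ hn
  have key : ∀ a b : ℝ, a * (x^2+y^2+z^2)^3 = 0 → a = 0 := fun a b ha =>
    (mul_eq_zero.mp ha).resolve_right hn3
  have ht00 : T 0 0 = 0 := key _ 0 (by
    linear_combination 3*(x^2+y^2+z^2)^2*(x*e000 + y*e001 + z*e002)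
      - (6/5 : ℝ)*x*hv0 + (2/5 : ℝ)*(x^2+y^2+z^2)*hq)
  have ht01 : T 0 1 = 0 := key _ 0 (by
    linear_combination 3*(x^2+y^2+z^2)^2*(x*e001 + y*e011 + z*e012)
      - (3/5 : ℝ)*y*hv0 - (3/5 : ℝ)*x*hv1)
  have ht02 : T 0 2 = 0 := key _ 0 (by
    linear_combination 3*(x^2+y^2+z^2)^2*(x*e002 + y*e012 + z*e022)
      - (3/5 : ℝ)*z*hv0 - (3/5 : ℝ)*x*hv2)
  have ht11 : T 1 1 = 0 := key _ 0 (by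
    linear_combination 3*(x^2+y^2+z^2)^2*(x*e011 + y*e111 + z*e112)
      - (6/5 : ℝ)*y*hv1 + (2/5 : ℝ)*(x^2+y^2+z^2)*hq)
  have ht12 : T 1 2 = 0 := key _ 0 (by
    linear_combination 3*(x^2+y^2+z^2)^2*(x*e012 + y*e112 + z*e122)
      - (3/5 : ℝ)*z*hv1 - (3/5 : ℝ)*y*hv2)
  have ht22 : T 2 2 = 0 := key _ 0 (by
    linear_combination 3*(x^2+y^2+z^2)^2*(x*e022 + y*e122 + z*e222)
      - (6/5 : ℝ)*z*hv2 + (2/5 : ℝ)*(x^2+y^2+z^2)*hq)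
  ext i j
  fin_cases i <;> fin_cases j <;>
    first
      | exact ht00 | exact ht01 | exact ht02 | exact ht11 | exact ht12 | exact ht22
      | exact hs10.trans ht01 | exact hs20.trans ht02 | exact hs21.trans ht12
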